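/- Let m ≥ 1 and λ₁,…,λ_m > 0; set Λ = Σ_{k=1}^m √λ_k and w_P(y) = exp(−½ Σ_{k=1}^m √λ_k y_k²) for y ∈ ℝᵐ. Then for any real coefficients (c_{ijk})_{1 ≤ i ≤ j ≤ k ≤ m} there exists a polynomial q on ℝᵐ of total degree at most 3 such that the function w₁ = q · w_P satisfies, for all y ∈ ℝᵐ, −Δw₁(y) + (Σ_{k=1}^m λ_k y_k²) w₁(y) − Λ w₁(y) + (Σ_{1 ≤ i ≤ j ≤ k ≤ m} c_{ijk} y_i y_j y_k) w_P(y) = 0. -/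

import Mathlib

open Real

/-- The Euclidean Laplacian on `ℝᵐ`: `Δu(x) = ∑ i, ∂²u/∂xᵢ²(x)`. -/
noncomputable def laplacian {m : ℕ} (u : (Fin m → ℝ) → ℝ) (x : Fin m → ℝ) : ℝ :=
  ∑ i, iteratedDeriv 2 (fun t => u (Function.update x i t)) (x i)

section Aux

open Polynomial

lemma deriv_poly_gauss (P : Polynomial ℝ) (a b : ℝ) :
    deriv (fun t => P.eval t * Real.exp (-(1/2)*(a*t^2 + b))) =
    fun t => (P.derivative - Polynomial.C a * Polynomial.X * P).eval t
      * Real.exp (-(1/2)*(a*t^2 + b)) := by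
  funext t
  have h1 : HasDerivAt (fun t : ℝ => P.eval t) (P.derivative.eval t) t := P.hasDerivAt t
  have h2 : HasDerivAt (fun t : ℝ => -(1/2)*(a*t^2 + b)) (-(a*t)) t := by
    have : HasDerivAt (fun t : ℝ => a*t^2 + b) (a*(2*t)) t :=
      (((hasDerivAt_pow 2 t).const_mul a).add_const b).congr_deriv (by ring)
    exact this.const_mul (-(1/2)) |>.congr_deriv (by ring)
  have h3 := h2.exp
  have h := h1.mul h3
  rw [(show HasDerivAt (fun t => P.eval t * Real.exp (-(1/2)*(a*t^2 + b))) _ t from h).deriv]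
  simp only [Polynomial.eval_sub, Polynomial.eval_mul, Polynomial.eval_C, Polynomial.eval_X]
  ring

lemma iteratedDeriv_two_poly_gauss (P : Polynomial ℝ) (a b t : ℝ) :
    iteratedDeriv 2 (fun t => P.eval t * Real.exp (-(1/2)*(a*t^2 + b))) t =
    ((P.derivative.derivative).eval t - 2*a*t*(P.derivative.eval t)
      + (a^2*t^2 - a)*P.eval t) * Real.exp (-(1/2)*(a*t^2 + b)) := by
  rw [show (2:ℕ) = 1+1 from rfl, iteratedDeriv_succ, iteratedDeriv_one,
    deriv_poly_gauss, deriv_poly_gauss]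
  simp only [Polynomial.derivative_sub, Polynomial.derivative_mul, Polynomial.derivative_C,
    Polynomial.derivative_X, Polynomial.eval_sub, Polynomial.eval_mul, Polynomial.eval_add,
    Polynomial.eval_C, Polynomial.eval_X, Polynomial.eval_one, Polynomial.eval_zero]
  ring

noncomputable def lineMap {m : ℕ} (y : Fin m → ℝ) (i : Fin m) :
    MvPolynomial (Fin m) ℝ →ₐ[ℝ] Polynomial ℝ :=
  MvPolynomial.aeval (fun k => if k = i then Polynomial.X else Polynomial.C (y k))

lemma lineMap_eval {m : ℕ} (y : Fin m → ℝ) (i : Fin m) (t : ℝ) (q : MvPolynomial (Fin m) ℝ) :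
    (lineMap y i q).eval t = MvPolynomial.eval (Function.update y i t) q := by
  induction q using MvPolynomial.induction_on with
  | C a => simp [lineMap]
  | add p r hp hr => simp [map_add, hp, hr]
  | mul_X p k hp =>
    rw [map_mul, Polynomial.eval_mul, hp, MvPolynomial.eval_mul, MvPolynomial.eval_X]
    congr 1
    by_cases h : k = i
    · subst h; simp [lineMap, Function.update_self]
    · simp [lineMap, h, Function.update_of_ne h]

lemma lineMap_derivative {m : ℕ} (y : Fin m → ℝ) (i : Fin m) (q : MvPolynomial (Fin m) ℝ) :
    (lineMap y i q).derivative = lineMap y i (MvPolynomial.pderiv i q) := by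
  induction q using MvPolynomial.induction_on with
  | C a => simp [lineMap]
  | add p r hp hr => simp [map_add, hp, hr]
  | mul_X p k hp =>
    rw [map_mul, Polynomial.derivative_mul, MvPolynomial.pderiv_mul, map_add, map_mul, map_mul, hp]
    by_cases h : k = i
    · subst h
      simp [lineMap, MvPolynomial.pderiv_X_self]
    · simp [lineMap, MvPolynomial.pderiv_X_of_ne h, h]

lemma sum_update_sq {m : ℕ} (μ : Fin m → ℝ) (y : Fin m → ℝ) (i : Fin m) (t : ℝ) :
    ∑ k, μ k * (Function.update y i t k)^2
      = μ i * t^2 + ∑ k ∈ Finset.univ \ {i}, μ k * (y k)^2 := by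
  have : (fun k => μ k * (Function.update y i t k)^2)
      = Function.update (fun k => μ k * (y k)^2) i (μ i * t^2) := by
    funext k
    by_cases h : k = i
    · subst h; simp
    · simp [h, Function.update_of_ne h]
  rw [this, Finset.sum_update_of_mem (Finset.mem_univ i)]

lemma laplacian_poly_gauss {m : ℕ} (μ : Fin m → ℝ) (q : MvPolynomial (Fin m) ℝ)
    (y : Fin m → ℝ) :
    laplacian (fun z => MvPolynomial.eval z q * Real.exp (-(1/2) * ∑ k, μ k * (z k)^2)) y
    = ∑ i, (MvPolynomial.eval y (MvPolynomial.pderiv i (MvPolynomial.pderiv i q))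
        - 2*(μ i)*(y i)* MvPolynomial.eval y (MvPolynomial.pderiv i q)
        + ((μ i)^2*(y i)^2 - μ i) * MvPolynomial.eval y q)
      * Real.exp (-(1/2) * ∑ k, μ k * (y k)^2) := by
  unfold laplacian
  refine Finset.sum_congr rfl fun i _ => ?_
  set b := ∑ k ∈ Finset.univ \ {i}, μ k * (y k)^2 with hb
  have hfun : (fun t => MvPolynomial.eval (Function.update y i t) q
        * Real.exp (-(1/2) * ∑ k, μ k * (Function.update y i t k)^2))
      = fun t => (lineMap y i q).eval t * Real.exp (-(1/2)*((μ i)*t^2 + b)) := by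
    funext t
    rw [lineMap_eval, sum_update_sq]
  have hB : μ i * (y i)^2 + b = ∑ k, μ k * (y k)^2 := by
    rw [← sum_update_sq μ y i (y i)]
    exact Finset.sum_congr rfl fun k _ => by rw [Function.update_eq_self]
  rw [hfun, iteratedDeriv_two_poly_gauss, lineMap_derivative, lineMap_derivative,
    lineMap_eval, Function.update_eq_self, hB]
  simp only [lineMap_eval, Function.update_eq_self]

end Aux

section Triple

open MvPolynomial

noncomputable def delta {m : ℕ} (a b : Fin m) : ℝ := if a = b then 1 else 0

noncomputable def qT {m : ℕ} (μ : Fin m → ℝ) (i j k : Fin m) : MvPolynomial (Fin m) ℝ :=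
  let α : ℝ := -(1/(2*(μ i + μ j + μ k)))
  C α * (X i * X j * X k) + C (α * delta i j / μ k) * X k
    + C (α * delta i k / μ j) * X j + C (α * delta j k / μ i) * X i

lemma evD1 {m : ℕ} (μ : Fin m → ℝ) (i j k l : Fin m) (y : Fin m → ℝ) :
    eval y (pderiv l (qT μ i j k)) =
      (-(1/(2*(μ i + μ j + μ k)))) *
        (delta i l * (y j * y k) + delta j l * (y i * y k) + delta k l * (y i * y j))
      + ((-(1/(2*(μ i + μ j + μ k)))) * delta i j / μ k) * delta k l
      + ((-(1/(2*(μ i + μ j + μ k)))) * delta i k / μ j) * delta j l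
      + ((-(1/(2*(μ i + μ j + μ k)))) * delta j k / μ i) * delta i l := by
  simp only [qT, delta, map_add, MvPolynomial.pderiv_mul, MvPolynomial.pderiv_C,
    MvPolynomial.pderiv_X, Pi.single_apply, map_mul, map_add, eval_C, eval_X,
    eval_mul, eval_add, zero_mul, add_zero, zero_add, apply_ite (eval y), map_one, map_zero,
    mul_ite, ite_mul, mul_zero, mul_one, one_mul]
  split_ifs <;> ring

lemma evD2 {m : ℕ} (μ : Fin m → ℝ) (i j k l : Fin m) (y : Fin m → ℝ) :
    eval y (pderiv l (pderiv l (qT μ i j k))) =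
      (-(1/(2*(μ i + μ j + μ k)))) * 2 *
        (delta i l * delta j l * y k + delta i l * delta k l * y j
          + delta j l * delta k l * y i) := by
  simp only [qT, delta, map_add, MvPolynomial.pderiv_mul, MvPolynomial.pderiv_C,
    MvPolynomial.pderiv_X, Pi.single_apply, map_mul, map_add,
    apply_ite (MvPolynomial.pderiv l), MvPolynomial.pderiv_one, map_zero,
    eval_C, eval_X, eval_mul, eval_add, zero_mul, mul_zero, add_zero, zero_add,
    apply_ite (eval y), map_one, mul_ite, ite_mul, mul_one, one_mul]
  split_ifs <;> ring

lemma sum_dd {m : ℕ} (a b : Fin m) : ∑ l, delta a l * delta b l = delta a b := by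
  simp [delta, ite_mul, one_mul, zero_mul, Finset.sum_ite_eq, eq_comm]

lemma sum_myd {m : ℕ} (μ : Fin m → ℝ) (y : Fin m → ℝ) (a : Fin m) :
    ∑ l, μ l * y l * delta a l = μ a * y a := by
  simp [delta, mul_ite, mul_one, mul_zero, Finset.sum_ite_eq, eq_comm]

lemma triple_identity {m : ℕ} (μ : Fin m → ℝ) (hμ : ∀ l, 0 < μ l) (i j k : Fin m)
    (y : Fin m → ℝ) :
    (∑ l, eval y (pderiv l (pderiv l (qT μ i j k))))
      - 2 * ∑ l, μ l * y l * eval y (pderiv l (qT μ i j k)) = y i * y j * y k := by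
  have hi := (hμ i).ne'
  have hj := (hμ j).ne'
  have hk := (hμ k).ne'
  have hσ : μ i + μ j + μ k ≠ 0 := by
    have h1 := hμ i; have h2 := hμ j; have h3 := hμ k; linarith
  set α : ℝ := -(1/(2*(μ i + μ j + μ k))) with hα
  have hS2 : (∑ l, eval y (pderiv l (pderiv l (qT μ i j k))))
      = α * 2 * (delta i j * y k + delta i k * y j + delta j k * y i) := by
    rw [Finset.sum_congr rfl (fun l _ => evD2 μ i j k l y), ← Finset.mul_sum]
    congr 1
    rw [Finset.sum_add_distrib, Finset.sum_add_distrib,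
      ← Finset.sum_mul, ← Finset.sum_mul, ← Finset.sum_mul, sum_dd, sum_dd, sum_dd]
  have hS1 : (∑ l, μ l * y l * eval y (pderiv l (qT μ i j k)))
      = α * (μ i * y i * (y j * y k) + μ j * y j * (y i * y k) + μ k * y k * (y i * y j))
        + (α * delta i j / μ k) * (μ k * y k) + (α * delta i k / μ j) * (μ j * y j)
        + (α * delta j k / μ i) * (μ i * y i) := by
    have step : ∀ l, μ l * y l * eval y (pderiv l (qT μ i j k))
        = α * (y j * y k) * (μ l * y l * delta i l) + α * (y i * y k) * (μ l * y l * delta j l)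
          + α * (y i * y j) * (μ l * y l * delta k l)
          + (α * delta i j / μ k) * (μ l * y l * delta k l)
          + (α * delta i k / μ j) * (μ l * y l * delta j l)
          + (α * delta j k / μ i) * (μ l * y l * delta i l) := by
      intro l; rw [evD1]; ring
    rw [Finset.sum_congr rfl (fun l _ => step l)]
    rw [Finset.sum_add_distrib, Finset.sum_add_distrib, Finset.sum_add_distrib,
      Finset.sum_add_distrib, Finset.sum_add_distrib,
      ← Finset.mul_sum, ← Finset.mul_sum, ← Finset.mul_sum, ← Finset.mul_sum,
      ← Finset.mul_sum, ← Finset.mul_sum, sum_myd, sum_myd, sum_myd]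
    ring
  have e1 : α * delta i j / μ k * (μ k * y k) = α * delta i j * y k := by field_simp
  have e2 : α * delta i k / μ j * (μ j * y j) = α * delta i k * y j := by field_simp
  have e3 : α * delta j k / μ i * (μ i * y i) = α * delta j k * y i := by field_simp
  rw [hS2, hS1, e1, e2, e3, hα]
  field_simp
  ring

lemma qT_totalDegree {m : ℕ} (μ : Fin m → ℝ) (i j k : Fin m) :
    (qT μ i j k).totalDegree ≤ 3 := by
  have hCX : ∀ (a : ℝ) (v : Fin m), ((C a * X v : MvPolynomial (Fin m) ℝ)).totalDegree ≤ 3 := by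
    intro a v
    refine (totalDegree_mul _ _).trans ?_
    simp [totalDegree_C, totalDegree_X]
  refine (totalDegree_add _ _).trans (max_le ((totalDegree_add _ _).trans
    (max_le ((totalDegree_add _ _).trans (max_le ?_ (hCX _ _))) (hCX _ _))) (hCX _ _))
  refine (totalDegree_mul _ _).trans ?_
  have : ((X i * X j * X k : MvPolynomial (Fin m) ℝ)).totalDegree ≤ 3 := by
    refine (totalDegree_mul _ _).trans ?_
    have h1 : ((X i * X j : MvPolynomial (Fin m) ℝ)).totalDegree ≤ 2 :=
      (totalDegree_mul _ _).trans (by simp [totalDegree_X])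
    calc (X i * X j : MvPolynomial (Fin m) ℝ).totalDegree + (X k).totalDegree
        ≤ 2 + 1 := by
          exact add_le_add h1 (le_of_eq (totalDegree_X k))
      _ = 3 := rfl
  rw [MvPolynomial.totalDegree_C, zero_add]
  exact this

end Triple

theorem stmt_6 (m : ℕ) (hm : 1 ≤ m) (lam : Fin m → ℝ) (hlam : ∀ i, 0 < lam i)
    (Λ : ℝ) (hΛ : Λ = ∑ k, Real.sqrt (lam k))
    (wP : (Fin m → ℝ) → ℝ)
    (hwP : ∀ y, wP y = Real.exp (-(1/2) * ∑ k, Real.sqrt (lam k) * (y k)^2))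
    (c : Fin m → Fin m → Fin m → ℝ) :
    ∃ q : MvPolynomial (Fin m) ℝ, q.totalDegree ≤ 3 ∧
      ∀ y : Fin m → ℝ,
        -(laplacian (fun z => MvPolynomial.eval z q * wP z) y)
          + (∑ k, lam k * (y k)^2) * (MvPolynomial.eval y q * wP y)
          - Λ * (MvPolynomial.eval y q * wP y)
          + (∑ i, ∑ j, ∑ k,
              if i ≤ j ∧ j ≤ k then c i j k * y i * y j * y k else 0) * wP y
          = 0 := by
  classical
  set μ : Fin m → ℝ := fun l => Real.sqrt (lam l) with hμdef
  have hμpos : ∀ l, 0 < μ l := fun l => Real.sqrt_pos.2 (hlam l)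
  have hμsq : ∀ l, (μ l)^2 = lam l := fun l => Real.sq_sqrt (hlam l).le
  set coef : Fin m × Fin m × Fin m → ℝ :=
    fun t => if t.1 ≤ t.2.1 ∧ t.2.1 ≤ t.2.2 then c t.1 t.2.1 t.2.2 else 0 with hcoef
  refine ⟨∑ t : Fin m × Fin m × Fin m, coef t • qT μ t.1 t.2.1 t.2.2, ?_, ?_⟩
  · refine MvPolynomial.totalDegree_finsetSum_le fun t _ => ?_
    exact (MvPolynomial.totalDegree_smul_le _ _).trans (qT_totalDegree μ _ _ _)
  intro y
  set q : MvPolynomial (Fin m) ℝ := ∑ t : Fin m × Fin m × Fin m, coef t • qT μ t.1 t.2.1 t.2.2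
    with hq
  have hfun : (fun z => MvPolynomial.eval z q * wP z)
      = fun z => MvPolynomial.eval z q * Real.exp (-(1/2) * ∑ k, μ k * (z k)^2) :=
    funext fun z => by rw [hwP]
  rw [hfun, laplacian_poly_gauss μ q y, hwP y, hΛ, ← Finset.sum_mul]
  set E : ℝ := Real.exp (-(1/2) * ∑ k, μ k * (y k)^2) with hE
  set Q : ℝ := MvPolynomial.eval y q with hQ
  -- abbreviations for derivatives
  set D1 : Fin m → ℝ := fun l => MvPolynomial.eval y (MvPolynomial.pderiv l q) with hD1
  set D2 : Fin m → ℝ := fun l =>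
    MvPolynomial.eval y (MvPolynomial.pderiv l (MvPolynomial.pderiv l q)) with hD2
  have hmain : (∑ l, (D2 l - 2*(μ l)*(y l)*D1 l))
      = ∑ i, ∑ j, ∑ k, (if i ≤ j ∧ j ≤ k then c i j k * y i * y j * y k else 0) := by
    have expand : ∀ l, D2 l - 2*(μ l)*(y l)*D1 l
        = ∑ t : Fin m × Fin m × Fin m, coef t *
            (MvPolynomial.eval y (MvPolynomial.pderiv l (MvPolynomial.pderiv l
                (qT μ t.1 t.2.1 t.2.2)))
              - 2*(μ l * y l * MvPolynomial.eval y (MvPolynomial.pderiv l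
                (qT μ t.1 t.2.1 t.2.2)))) := by
      intro l
      rw [hD1, hD2, hq]
      simp only [map_sum, MvPolynomial.smul_eq_C_mul, MvPolynomial.pderiv_C_mul,
        MvPolynomial.eval_mul, MvPolynomial.eval_C]
      rw [Finset.mul_sum, ← Finset.sum_sub_distrib]
      refine Finset.sum_congr rfl fun t _ => by ring
    calc (∑ l, (D2 l - 2*(μ l)*(y l)*D1 l))
        = ∑ l, ∑ t : Fin m × Fin m × Fin m, coef t *
            (MvPolynomial.eval y (MvPolynomial.pderiv l (MvPolynomial.pderiv l
                (qT μ t.1 t.2.1 t.2.2)))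
              - 2*(μ l * y l * MvPolynomial.eval y (MvPolynomial.pderiv l
                (qT μ t.1 t.2.1 t.2.2)))) :=
          Finset.sum_congr rfl fun l _ => expand l
      _ = ∑ t : Fin m × Fin m × Fin m, coef t * (y t.1 * y t.2.1 * y t.2.2) := by
          rw [Finset.sum_comm]
          refine Finset.sum_congr rfl fun t _ => ?_
          rw [← Finset.mul_sum]
          congr 1
          rw [Finset.sum_sub_distrib, ← Finset.mul_sum]
          exact triple_identity μ hμpos t.1 t.2.1 t.2.2 y
      _ = ∑ i, ∑ j, ∑ k, (if i ≤ j ∧ j ≤ k then c i j k * y i * y j * y k else 0) := by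
          rw [Fintype.sum_prod_type]
          refine Finset.sum_congr rfl fun i _ => ?_
          rw [Fintype.sum_prod_type]
          refine Finset.sum_congr rfl fun j _ => Finset.sum_congr rfl fun k _ => ?_
          simp only [hcoef, ite_mul, zero_mul]
          split_ifs with h
          · ring
          · rfl
  have hsum : (∑ l, (D2 l - 2*(μ l)*(y l)*D1 l + ((μ l)^2*(y l)^2 - μ l) * Q))
      = (∑ l, (D2 l - 2*(μ l)*(y l)*D1 l))
        + ((∑ l, lam l * (y l)^2) * Q - (∑ l, μ l) * Q) := by
    rw [Finset.sum_add_distrib]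
    congr 1
    calc ∑ l, ((μ l)^2*(y l)^2 - μ l) * Q
        = ∑ l, (lam l * (y l)^2 * Q - μ l * Q) :=
          Finset.sum_congr rfl fun l _ => by rw [← hμsq l]; ring
      _ = (∑ l, lam l * (y l)^2) * Q - (∑ l, μ l) * Q := by
          rw [Finset.sum_sub_distrib, Finset.sum_mul, Finset.sum_mul]
  rw [hsum, hmain]
  ring
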